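/- Let M be a loopless matroid with ground set E, and let e ∈ E. Then ∑_{F flat, e ∈ F ⊊ E} χ̄_{M/F}(q) = [rk M − 1]_q. -/

import Mathlib

open Polynomial

namespace MatroidZeta

open scoped Classical

variable {α : Type*}

/-- The `q`-analogue `[n]_q = 1 + q + ⋯ + q^(n-1)` of a natural number `n`, in `ℤ[q]`. -/
noncomputable def qAnalogue (n : ℕ) : Polynomial ℤ := ∑ i ∈ Finset.range n, X ^ i

/-- The rank of a set `X` in a matroid `M`: the largest size of an independent subset of `X`. -/
noncomputable def rk (M : Matroid α) (X : Set α) : ℕ :=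
  sSup {n | ∃ I, M.Indep I ∧ I ⊆ X ∧ I.ncard = n}

/-- Contraction `M / C` of a matroid, defined as the dual of the deletion of `C`
from the dual matroid. -/
noncomputable def contract (M : Matroid α) (C : Set α) : Matroid α :=
  ((M✶.restrict (M✶.E \ C))✶)

/-- A matroid is loopless if no element of the ground set lies in the closure of `∅`. -/
def Loopless (M : Matroid α) : Prop := M.closure ∅ = ∅

/-- The characteristic polynomial `χ_M(q) = ∑_{S ⊆ E} (-1)^{#S} q^(rk M - rk S)`. -/
noncomputable def charPoly (M : Matroid α) : Polynomial ℤ :=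
  ∑ᶠ S ∈ {S : Set α | S ⊆ M.E}, (-1 : ℤ) ^ S.ncard • (X : Polynomial ℤ) ^ (rk M M.E - rk M S)

/-- The reduced characteristic polynomial
`χ̄_M(q) = χ_M(q)/(q-1) = ∑_{S ⊆ E} (-1)^{#S} [rk M - rk S]_q`. -/
noncomputable def redCharPoly (M : Matroid α) : Polynomial ℤ :=
  ∑ᶠ S ∈ {S : Set α | S ⊆ M.E}, (-1 : ℤ) ^ S.ncard • qAnalogue (rk M M.E - rk M S)

/-- `wt_M(w) = max_{B basis of M} ∑_{e ∈ B} w e`. -/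
noncomputable def wt (M : Matroid α) (w : α → ℝ) : ℝ :=
  sSup {x | ∃ B, M.IsBase B ∧ x = ∑ᶠ e ∈ B, w e}

/-- The initial matroid `M_w`: the matroid on the ground set of `M` whose bases are the
bases of `M` of maximal `w`-weight.  (Such a matroid exists and is unique.) -/
noncomputable def initialMatroid (M : Matroid α) (w : α → ℝ) : Matroid α :=
  if h : ∃ N : Matroid α, N.E = M.E ∧
      ∀ B, N.IsBase B ↔ M.IsBase B ∧ ∑ᶠ e ∈ B, w e = wt M w
  then h.choose else M

/-- A flag of non-minimal flats of `M`: a chain of flats strictly above `cl(∅)`. -/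
def IsFlag (M : Matroid α) (C : Finset (Set α)) : Prop :=
  (∀ F ∈ C, M.IsFlat F ∧ M.closure ∅ ⊂ F) ∧ IsChain (· ⊆ ·) (C : Set (Set α))

/-- `N(M)`: the set of flags of non-minimal flats of `M`. -/
def flags (M : Matroid α) : Set (Finset (Set α)) := {C | IsFlag M C}

/-- `N°(M)`: flags not containing the ground set. -/
def flagsCirc (M : Matroid α) : Set (Finset (Set α)) := {C | IsFlag M C ∧ M.E ∉ C}

/-- `N*(M)`: flags containing the ground set. -/
def flagsStar (M : Matroid α) : Set (Finset (Set α)) := {C | IsFlag M C ∧ M.E ∈ C}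

/-- `z_C(F)`: the largest member of the chain `C` strictly below `F` (or `∅` if none). -/
def zmin (C : Finset (Set α)) (F : Set α) : Set α := ⋃₀ {G | G ∈ C ∧ G ⊂ F}

/-- The weight vector `∑_{F ∈ C} v_F`, a point in the relative interior of the cone `σ_C`. -/
noncomputable def flagWeight (C : Finset (Set α)) : α → ℝ :=
  fun e => ∑ F ∈ C, if e ∈ F then (1 : ℝ) else 0

/-- The initial matroid `M_C` of a flag `C`. -/
noncomputable def flagMatroid (M : Matroid α) (C : Finset (Set α)) : Matroid α :=
  initialMatroid M (flagWeight C)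


section RankLemmas
variable {M : Matroid α} {X Y C S I B : Set α} {e x : α}

lemma rkSet_zero_mem (M : Matroid α) (X : Set α) :
    0 ∈ {n | ∃ I, M.Indep I ∧ I ⊆ X ∧ I.ncard = n} :=
  ⟨∅, M.empty_indep, Set.empty_subset X, Set.ncard_empty _⟩

lemma rkSet_bdd (hE : M.E.Finite) (X : Set α) :
    BddAbove {n | ∃ I, M.Indep I ∧ I ⊆ X ∧ I.ncard = n} :=
  ⟨M.E.ncard, fun n ⟨I, hI, _, h⟩ => h ▸ Set.ncard_le_ncard hI.subset_ground hE⟩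

lemma le_rk (hE : M.E.Finite) (hI : M.Indep I) (hIX : I ⊆ X) : I.ncard ≤ rk M X :=
  le_csSup (rkSet_bdd hE X) ⟨I, hI, hIX, rfl⟩

lemma rk_le {n : ℕ} (h : ∀ I, M.Indep I → I ⊆ X → I.ncard ≤ n) : rk M X ≤ n :=
  csSup_le ⟨0, rkSet_zero_mem M X⟩ (fun _ ⟨I, hI, hIX, hm⟩ => hm ▸ h I hI hIX)

lemma rk_mono (hE : M.E.Finite) (h : X ⊆ Y) : rk M X ≤ rk M Y :=
  csSup_le_csSup (rkSet_bdd hE Y) ⟨0, rkSet_zero_mem M X⟩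
    (fun n ⟨I, hI, hIX, hn⟩ => ⟨I, hI, hIX.trans h, hn⟩)

lemma rk_eq_of_basis (hE : M.E.Finite) (hB : M.IsBasis I X) : rk M X = I.ncard := by
  refine le_antisymm (rk_le fun J hJ hJX => ?_) (le_rk hE hB.indep hB.subset)
  obtain ⟨J', hJ', hJJ'⟩ := hJ.subset_isBasis_of_subset hJX hB.subset_ground
  have h1 : J'.encard = I.encard := hJ'.encard_eq_encard hB
  calc J.ncard ≤ J'.ncard := Set.ncard_le_ncard hJJ' (hE.subset hJ'.indep.subset_ground)
    _ = I.ncard := by rw [Set.ncard_def, Set.ncard_def, h1]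

lemma rk_insert_of_mem_closure (hE : M.E.Finite) (hX : X ⊆ M.E) (hx : x ∈ M.closure X) :
    rk M (insert x X) = rk M X := by
  obtain ⟨I, hI⟩ := M.exists_isBasis X hX
  have hIb : M.IsBasis I (insert x X) := by
    refine hI.indep.isBasis_of_subset_of_subset_closure (hI.subset.trans (Set.subset_insert _ _)) ?_
    rw [hI.closure_eq_closure]
    exact Set.insert_subset hx (M.subset_closure X hX)
  rw [rk_eq_of_basis hE hIb, rk_eq_of_basis hE hI]

lemma rk_dual_add (hE : M.E.Finite) (hX : X ⊆ M.E) :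
    rk M✶ X + rk M M.E = X.ncard + rk M (M.E \ X) := by
  have hE' : M✶.E.Finite := by rwa [Matroid.dual_ground]
  obtain ⟨J, hJ⟩ := M.exists_isBasis (M.E \ X) Set.diff_subset
  obtain ⟨B, hB, hJB⟩ := hJ.indep.exists_isBase_superset
  have hBE : B ⊆ M.E := hB.subset_ground
  have hJX : Disjoint J X := (Set.subset_diff.mp hJ.subset).2
  have hBX : B \ X = J := by
    refine (hJ.eq_of_subset_indep (hB.indep.subset Set.diff_subset)
      (Set.subset_diff.mpr ⟨hJB, hJX⟩) (Set.diff_subset_diff_left hBE)).symm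
  have hfinX : X.Finite := hE.subset hX
  have hfinB : B.Finite := hE.subset hBE
  have hJr : rk M (M.E \ X) = J.ncard := rk_eq_of_basis hE hJ
  have hrE : rk M M.E = B.ncard := rk_eq_of_basis hE hB.isBasis_ground
  have key : rk M✶ X = (X \ B).ncard := by
    refine le_antisymm (rk_le fun I hI hIX => ?_) ?_
    · obtain ⟨hIE, B', hB', hIB'⟩ := Matroid.dual_indep_iff_exists'.mp hI
      have hB'E : B' ⊆ M.E := hB'.subset_ground
      have hfinB' : B'.Finite := hE.subset hB'E
      have h1 : I.ncard ≤ (X \ B').ncard :=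
        Set.ncard_le_ncard (Set.subset_diff.mpr ⟨hIX, hIB'⟩) hfinX.sdiff
      have e1 : (X ∩ B).ncard + (X \ B).ncard = X.ncard :=
        Set.ncard_inter_add_ncard_diff_eq_ncard X B hfinX
      have e2 : (X ∩ B').ncard + (X \ B').ncard = X.ncard :=
        Set.ncard_inter_add_ncard_diff_eq_ncard X B' hfinX
      have e3 : (B ∩ X).ncard + (B \ X).ncard = B.ncard :=
        Set.ncard_inter_add_ncard_diff_eq_ncard B X hfinB
      have e4 : (B' ∩ X).ncard + (B' \ X).ncard = B'.ncard :=
        Set.ncard_inter_add_ncard_diff_eq_ncard B' X hfinB'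
      have e5 : (B' \ X).ncard ≤ J.ncard := by
        rw [← hJr]
        exact le_rk hE (hB'.indep.subset Set.diff_subset) (Set.diff_subset_diff_left hB'E)
      have e6 : B.ncard = B'.ncard := by
        rw [Set.ncard_def, Set.ncard_def, hB.encard_eq_encard_of_isBase hB']
      have e7 : (B \ X).ncard = J.ncard := by rw [hBX]
      have e8 : (X ∩ B).ncard = (B ∩ X).ncard := by rw [Set.inter_comm]
      have e9 : (X ∩ B').ncard = (B' ∩ X).ncard := by rw [Set.inter_comm]
      omega
    · refine le_rk hE' (Matroid.dual_indep_iff_exists'.mpr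
        ⟨Set.diff_subset.trans hX, B, hB,
          Set.disjoint_sdiff_left⟩) Set.diff_subset
  have e1 : (X ∩ B).ncard + (X \ B).ncard = X.ncard :=
    Set.ncard_inter_add_ncard_diff_eq_ncard X B hfinX
  have e3 : (B ∩ X).ncard + (B \ X).ncard = B.ncard :=
    Set.ncard_inter_add_ncard_diff_eq_ncard B X hfinB
  have e7 : (B \ X).ncard = J.ncard := by rw [hBX]
  have e8 : (X ∩ B).ncard = (B ∩ X).ncard := by rw [Set.inter_comm]
  rw [key, hJr, hrE]
  omega

lemma rk_restrict {R : Set α} (h : Y ⊆ R) : rk (M.restrict R) Y = rk M Y := by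
  unfold rk
  congr 1
  ext n
  constructor
  · rintro ⟨I, hI, hIY, hn⟩
    exact ⟨I, (Matroid.restrict_indep_iff.mp hI).1, hIY, hn⟩
  · rintro ⟨I, hI, hIY, hn⟩
    exact ⟨I, Matroid.restrict_indep_iff.mpr ⟨hI, hIY.trans h⟩, hIY, hn⟩

lemma contract_ground (M : Matroid α) (C : Set α) : (contract M C).E = M.E \ C := rfl

lemma rk_contract_add (hE : M.E.Finite) (hC : C ⊆ M.E) (hS : S ⊆ M.E \ C) :
    rk (contract M C) S + rk M C = rk M (C ∪ S) := by
  set D := M✶.restrict (M✶.E \ C) with hD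
  have hDE : D.E = M.E \ C := by rw [hD, Matroid.restrict_ground_eq, Matroid.dual_ground]
  have hDfin : D.E.Finite := by rw [hDE]; exact hE.sdiff
  have h1 : rk D✶ S + rk D D.E = S.ncard + rk D (D.E \ S) := rk_dual_add hDfin (hDE ▸ hS)
  have h2 : rk D D.E = rk M✶ (M.E \ C) := by
    rw [hD, Matroid.dual_ground]
    have : (M✶.restrict (M.E \ C)).E = M.E \ C := Matroid.restrict_ground_eq
    rw [this]
    exact rk_restrict subset_rfl
  have h3 : rk D (D.E \ S) = rk M✶ ((M.E \ C) \ S) := by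
    rw [hDE, hD, Matroid.dual_ground]
    exact rk_restrict Set.diff_subset
  have h4 := rk_dual_add (M := M) hE (X := M.E \ C) Set.diff_subset
  have h5 := rk_dual_add (M := M) hE (X := (M.E \ C) \ S) ((Set.diff_subset).trans Set.diff_subset)
  have hc1 : M.E \ (M.E \ C) = C := Set.diff_diff_cancel_left hC
  have hc2 : M.E \ ((M.E \ C) \ S) = C ∪ S := by
    rw [Set.diff_diff]
    exact Set.diff_diff_cancel_left (Set.union_subset hC (hS.trans Set.diff_subset))
  rw [hc1] at h4
  rw [hc2] at h5
  have hcard : ((M.E \ C) \ S).ncard + S.ncard = (M.E \ C).ncard :=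
    Set.ncard_diff_add_ncard_of_subset hS (hE.sdiff)
  have hNC : contract M C = D✶ := rfl
  rw [h2, h3] at h1
  rw [hNC]
  omega

lemma rk_contract_ground_add (hE : M.E.Finite) (hC : C ⊆ M.E) :
    rk (contract M C) (M.E \ C) + rk M C = rk M M.E := by
  have := rk_contract_add hE hC (S := M.E \ C) subset_rfl
  rwa [Set.union_diff_cancel hC] at this

lemma contract_not_indep_singleton (hE : M.E.Finite) (hC : C ⊆ M.E)
    (hx : x ∈ M.closure C \ C) : ¬ (contract M C).Indep {x} := by
  have hxE : x ∈ M.E := Matroid.mem_ground_of_mem_closure hx.1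
  have h1 : rk M (C ∪ {x}) = rk M C := by
    rw [Set.union_singleton, rk_insert_of_mem_closure hE hC hx.1]
  have h2 := rk_contract_add hE hC (S := {x})
    (Set.singleton_subset_iff.mpr ⟨hxE, hx.2⟩)
  intro h
  have h3 : (1 : ℕ) ≤ rk (contract M C) {x} := by
    have := le_rk (M := contract M C)
      (by rw [contract_ground]; exact hE.sdiff) h subset_rfl
    rwa [Set.ncard_singleton] at this
  omega

lemma rk_insert_of_not_indep {N : Matroid α} (hxi : ¬ N.Indep {x}) (S : Set α) :
    rk N (insert x S) = rk N S := by
  unfold rk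
  congr 1
  ext n
  constructor
  · rintro ⟨I, hI, hIS, hn⟩
    have hxI : x ∉ I := fun hmem => hxi (hI.subset (Set.singleton_subset_iff.mpr hmem))
    exact ⟨I, hI, (Set.subset_insert_iff_of_notMem hxI).mp hIS, hn⟩
  · rintro ⟨I, hI, hIS, hn⟩
    exact ⟨I, hI, hIS.trans (Set.subset_insert _ _), hn⟩

lemma closure_flat' (M : Matroid α) (X : Set α) : M.IsFlat (M.closure X) := by
  rw [Matroid.closure_def]
  have hne : Nonempty {F // F ∈ {F | M.IsFlat F ∧ X ∩ M.E ⊆ F}} :=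
    ⟨⟨M.E, M.ground_isFlat, Set.inter_subset_right⟩⟩
  rw [Set.sInter_eq_iInter]
  exact Matroid.IsFlat.iInter fun F => F.2.1

lemma exists_closure_mem_of_not_flat (hC : C ⊆ M.E) (h : ¬ M.IsFlat C) :
    ∃ x, x ∈ M.closure C \ C := by
  have hsub : C ⊆ M.closure C := M.subset_closure C hC
  have hne : C ≠ M.closure C := by
    intro heq
    exact h (heq ▸ closure_flat' M C)
  exact Set.exists_of_ssubset (ssubset_of_subset_of_ne hsub hne) |>.imp
    fun x hx => ⟨hx.1, hx.2⟩

lemma indep_singleton_of_loopless (hM : M.closure ∅ = ∅) (he : e ∈ M.E) :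
    M.Indep {e} := by
  obtain ⟨I, hI⟩ := M.exists_isBasis {e} (Set.singleton_subset_iff.mpr he)
  rcases Set.subset_singleton_iff_eq.mp hI.subset with h | h
  · exfalso
    have h2 := hI.subset_closure
    rw [h, hM] at h2
    exact h2 rfl
  · exact h ▸ hI.indep


end RankLemmas

variable {M : Matroid α} {e x : α}

lemma finsum_mem_eq_finset_sum (P : Set α) (hP : P.Finite) (Q : Set α → Prop)
    (hQ : ∀ F, Q F → F ⊆ P) (f : Set α → Polynomial ℤ) :
    ∑ᶠ F ∈ {F | Q F}, f F
      = ∑ T ∈ hP.toFinset.powerset.filter (fun T : Finset α => Q ↑T), f ↑T := by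
  have himg : {F | Q F}
      = ↑((hP.toFinset.powerset.filter (fun T : Finset α => Q ↑T)).image ((↑) : Finset α → Set α)) := by
    ext F
    simp only [Set.mem_setOf_eq, Finset.coe_image, Set.mem_image, Finset.mem_coe,
      Finset.mem_filter, Finset.mem_powerset]
    constructor
    · intro hF
      have hFfin : F.Finite := hP.subset (hQ F hF)
      refine ⟨hFfin.toFinset, ⟨?_, by rw [Set.Finite.coe_toFinset]; exact hF⟩,
        Set.Finite.coe_toFinset _⟩
      rw [Set.Finite.toFinset_subset_toFinset]
      exact hQ F hF
    · rintro ⟨T, ⟨hTP, hQT⟩, rfl⟩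
      exact hQT
  rw [himg, finsum_mem_coe_finset, Finset.sum_image]
  intro x _ y _ hxy
  exact Finset.coe_injective hxy

lemma charPoly_eq' (N : Matroid α) (E₀ : Finset α) (hE0 : ↑E₀ = N.E) :
    charPoly N = ∑ T ∈ E₀.powerset,
      (-1 : ℤ) ^ T.card • (X : Polynomial ℤ) ^ (rk N N.E - rk N ↑T) := by
  have hfin : N.E.Finite := by rw [← hE0]; exact E₀.finite_toSet
  rw [charPoly, finsum_mem_eq_finset_sum N.E hfin (fun S => S ⊆ N.E) (fun _ h => h) _]
  have h1 : hfin.toFinset = E₀ := by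
    ext a
    rw [Set.Finite.mem_toFinset, ← hE0, Finset.mem_coe]
  rw [h1, Finset.filter_true_of_mem
    (fun T hT => by rw [← hE0]; exact Finset.coe_subset.mpr (Finset.mem_powerset.mp hT))]
  refine Finset.sum_congr rfl fun T _ => ?_
  rw [Set.ncard_coe_finset]

lemma redCharPoly_eq' (N : Matroid α) (E₀ : Finset α) (hE0 : ↑E₀ = N.E) :
    redCharPoly N = ∑ T ∈ E₀.powerset,
      (-1 : ℤ) ^ T.card • qAnalogue (rk N N.E - rk N ↑T) := by
  have hfin : N.E.Finite := by rw [← hE0]; exact E₀.finite_toSet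
  rw [redCharPoly, finsum_mem_eq_finset_sum N.E hfin (fun S => S ⊆ N.E) (fun _ h => h) _]
  have h1 : hfin.toFinset = E₀ := by
    ext a
    rw [Set.Finite.mem_toFinset, ← hE0, Finset.mem_coe]
  rw [h1, Finset.filter_true_of_mem
    (fun T hT => by rw [← hE0]; exact Finset.coe_subset.mpr (Finset.mem_powerset.mp hT))]
  refine Finset.sum_congr rfl fun T _ => ?_
  rw [Set.ncard_coe_finset]

lemma charPoly_eq_zero_of_loop (N : Matroid α) (E₀ : Finset α) (x : α) (hE0 : ↑E₀ = N.E)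
    (hx : x ∈ E₀) (hxi : ¬ N.Indep {x}) : charPoly N = 0 := by
  rw [charPoly_eq' N E₀ hE0]
  have hsmul : ∀ (k : ℕ) (p : Polynomial ℤ),
      (-1 : ℤ) ^ (k + 1) • p + (-1 : ℤ) ^ k • p = 0 := by
    intro k p
    rw [← add_smul, pow_succ]
    have : (-1 : ℤ) ^ k * -1 + (-1 : ℤ) ^ k = 0 := by ring
    rw [this, zero_smul]
  have hrk : ∀ T : Finset α, x ∉ T → rk N ↑(insert x T) = rk N ↑T := by
    intro T _
    rw [Finset.coe_insert]
    exact rk_insert_of_not_indep hxi _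
  refine Finset.sum_involution
    (fun T _ => if x ∈ T then T.erase x else insert x T) ?_ ?_ ?_ ?_
  · intro T hT
    by_cases hxT : x ∈ T
    · rw [if_pos hxT]
      have hins : insert x (T.erase x) = T := Finset.insert_erase hxT
      have hcard : T.card = (T.erase x).card + 1 := (Finset.card_erase_add_one hxT).symm
      have hr : rk N ↑T = rk N ↑(T.erase x) := by
        conv_lhs => rw [← hins]
        exact hrk _ (Finset.notMem_erase _ _)
      rw [hcard, hr]
      exact hsmul _ _
    · rw [if_neg hxT]
      have hcard : (insert x T).card = T.card + 1 := Finset.card_insert_of_notMem hxT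
      rw [hcard, hrk T hxT, add_comm ((-1 : ℤ) ^ T.card • _)]
      exact hsmul _ _
  · intro T _
    intro _
    by_cases hxT : x ∈ T
    · rw [if_pos hxT]
      intro h
      exact (Finset.erase_eq_self.mp h) hxT
    · rw [if_neg hxT]
      intro h
      exact hxT (Finset.insert_eq_self.mp h)
  · intro T hT
    by_cases hxT : x ∈ T
    · rw [if_pos hxT]
      exact Finset.mem_powerset.mpr ((Finset.erase_subset _ _).trans
        (Finset.mem_powerset.mp hT))
    · rw [if_neg hxT]
      exact Finset.mem_powerset.mpr
        (Finset.insert_subset hx (Finset.mem_powerset.mp hT))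
  · intro T _
    by_cases hxT : x ∈ T
    · simp [if_pos hxT, Finset.notMem_erase, Finset.insert_erase hxT]
    · simp [if_neg hxT, Finset.mem_insert_self, Finset.erase_insert hxT, hxT]

lemma charPoly_of_ground_empty (N : Matroid α) (h : N.E = ∅) : charPoly N = 1 := by
  rw [charPoly_eq' N ∅ (by rw [Finset.coe_empty, h])]
  rw [Finset.powerset_empty, Finset.sum_singleton]
  simp only [Finset.card_empty, pow_zero, Finset.coe_empty]
  rw [h, Nat.sub_self, pow_zero, one_smul]

lemma X_sub_one_mul_qAnalogue (n : ℕ) :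
    ((X : Polynomial ℤ) - 1) * qAnalogue n = X ^ n - 1 := by
  rw [qAnalogue, mul_comm, geom_sum_mul]

lemma X_sub_one_mul_redCharPoly (N : Matroid α) (E₀ : Finset α) (hE0 : ↑E₀ = N.E)
    (hne : E₀.Nonempty) :
    ((X : Polynomial ℤ) - 1) * redCharPoly N = charPoly N := by
  rw [redCharPoly_eq' N E₀ hE0, charPoly_eq' N E₀ hE0, Finset.mul_sum]
  have hterm : ∀ T ∈ E₀.powerset,
      ((X : Polynomial ℤ) - 1) * ((-1 : ℤ) ^ T.card • qAnalogue (rk N N.E - rk N ↑T))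
        = (-1 : ℤ) ^ T.card • (X : Polynomial ℤ) ^ (rk N N.E - rk N ↑T)
          - (-1 : ℤ) ^ T.card • (1 : Polynomial ℤ) := by
    intro T _
    rw [mul_smul_comm, X_sub_one_mul_qAnalogue, smul_sub]
  rw [Finset.sum_congr rfl hterm, Finset.sum_sub_distrib]
  have h0 : ∑ T ∈ E₀.powerset, (-1 : ℤ) ^ T.card • (1 : Polynomial ℤ)
      = (∑ T ∈ E₀.powerset, (-1 : ℤ) ^ T.card) • (1 : Polynomial ℤ) := by
    rw [Finset.sum_smul]
  rw [h0, Finset.sum_powerset_neg_one_pow_card,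
    if_neg (Finset.nonempty_iff_ne_empty.mp hne), zero_smul, sub_zero]

theorem sum_redCharPoly_contract_mem (M : Matroid α) (hE : M.E.Finite)
    (hM : Loopless M) {e : α} (he : e ∈ M.E) :
    ∑ᶠ F ∈ {F : Set α | M.IsFlat F ∧ e ∈ F ∧ F ⊂ M.E}, redCharPoly (contract M F)
      = qAnalogue (rk M M.E - 1) := by
  classical
  have hcoe : (↑hE.toFinset : Set α) = M.E := hE.coe_toFinset
  set E' := hE.toFinset with hE'def
  have hIe : M.Indep {e} := indep_singleton_of_loopless hM he
  have hrk1 : rk M {e} = 1 := by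
    rw [rk_eq_of_basis hE hIe.isBasis_self, Set.ncard_singleton]
  have heE' : e ∈ E' := by rw [hE'def, Set.Finite.mem_toFinset]; exact he
  set Q : Set α → Prop := (fun F => M.IsFlat F ∧ e ∈ F ∧ F ⊂ M.E) with hQ
  have hconv := finsum_mem_eq_finset_sum M.E hE Q
    (fun F hF => hF.1.subset_ground) (fun F => redCharPoly (contract M F))
  rw [← hE'def] at hconv
  set 𝒻 := E'.powerset.filter (fun T : Finset α => Q ↑T) with h𝒻
  set 𝒢 := E'.powerset.filter (fun T : Finset α => e ∈ T) with h𝒢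
  set ℱ := 𝒢.filter (fun T : Finset α => M.IsFlat ↑T) with hℱ
  set r := rk M M.E with hrdef
  -- multiply the flat sum by X - 1
  have hmulF : ((X : Polynomial ℤ) - 1) * ∑ T ∈ 𝒻, redCharPoly (contract M ↑T)
      = ∑ T ∈ 𝒻, charPoly (contract M ↑T) := by
    rw [Finset.mul_sum]
    refine Finset.sum_congr rfl fun T hT => ?_
    rw [h𝒻, Finset.mem_filter, hQ] at hT
    obtain ⟨hTP, _, _, hTss⟩ := hT
    refine X_sub_one_mul_redCharPoly (contract M ↑T) (E' \ T) ?_ ?_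
    · rw [Finset.coe_sdiff, hcoe, contract_ground]
    · obtain ⟨y, hyE, hyT⟩ := Set.exists_of_ssubset hTss
      refine ⟨y, Finset.mem_sdiff.mpr ⟨?_, fun h => hyT (Finset.mem_coe.mpr h)⟩⟩
      rw [hE'def, Set.Finite.mem_toFinset]
      exact hyE
  -- non-flat terms vanish
  have hvanish : ∑ T ∈ 𝒢, charPoly (contract M ↑T) = ∑ T ∈ ℱ, charPoly (contract M ↑T) := by
    rw [hℱ]
    refine (Finset.sum_filter_of_ne fun T hT hne => ?_).symm
    by_contra hflat
    have hTsub : (↑T : Set α) ⊆ M.E := by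
      rw [← hcoe]
      exact Finset.coe_subset.mpr (Finset.mem_powerset.mp (Finset.mem_filter.mp hT).1)
    obtain ⟨y, hy⟩ := exists_closure_mem_of_not_flat hTsub hflat
    refine hne (charPoly_eq_zero_of_loop (contract M ↑T) (E' \ T) y ?_ ?_ ?_)
    · rw [Finset.coe_sdiff, hcoe, contract_ground]
    · refine Finset.mem_sdiff.mpr ⟨?_, fun h => hy.2 (Finset.mem_coe.mpr h)⟩
      rw [hE'def, Set.Finite.mem_toFinset]
      exact Matroid.mem_ground_of_mem_closure hy.1
    · exact contract_not_indep_singleton hE hTsub hy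
  -- split off the ground set term
  have hE'mem : E' ∈ ℱ := by
    rw [hℱ, Finset.mem_filter, h𝒢, Finset.mem_filter]
    refine ⟨⟨Finset.mem_powerset_self _, heE'⟩, ?_⟩
    rw [hcoe]
    exact M.ground_isFlat
  have herase : ℱ.erase E' = 𝒻 := by
    ext T
    rw [Finset.mem_erase, hℱ, Finset.mem_filter, h𝒢, Finset.mem_filter, h𝒻,
      Finset.mem_filter, hQ]
    constructor
    · rintro ⟨hne, ⟨⟨hTP, heT⟩, hflat⟩⟩
      refine ⟨hTP, hflat, Finset.mem_coe.mpr heT, ssubset_of_subset_of_ne ?_ ?_⟩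
      · rw [← hcoe]
        exact Finset.coe_subset.mpr (Finset.mem_powerset.mp hTP)
      · rw [← hcoe]
        exact fun h => hne (Finset.coe_injective h)
    · rintro ⟨hTP, hflat, heT, hss⟩
      refine ⟨fun h => ?_, ⟨⟨hTP, Finset.mem_coe.mp heT⟩, hflat⟩⟩
      rw [h, hcoe] at hss
      exact lt_irrefl _ hss
  have hsplit : ∑ T ∈ 𝒻, charPoly (contract M ↑T) + charPoly (contract M M.E)
      = ∑ T ∈ ℱ, charPoly (contract M ↑T) := by
    have h := Finset.sum_erase_add ℱ (fun T => charPoly (contract M ↑T)) hE'mem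
    rw [herase] at h
    rw [← h, ← hcoe]
  have htop : charPoly (contract M M.E) = 1 :=
    charPoly_of_ground_empty _ (by rw [contract_ground, Set.diff_self])
  -- the key computation over all subsets containing e
  have hstep : ∀ T ∈ 𝒢, charPoly (contract M ↑T)
      = ∑ S ∈ (E' \ T).powerset,
          (-1 : ℤ) ^ S.card • (X : Polynomial ℤ) ^ (r - rk M (↑T ∪ ↑S)) := by
    intro T hT
    rw [h𝒢, Finset.mem_filter] at hT
    obtain ⟨hTP, _⟩ := hT
    have hTsub : (↑T : Set α) ⊆ M.E := by
      rw [← hcoe]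
      exact Finset.coe_subset.mpr (Finset.mem_powerset.mp hTP)
    rw [charPoly_eq' (contract M ↑T) (E' \ T)
      (by rw [Finset.coe_sdiff, hcoe, contract_ground])]
    refine Finset.sum_congr rfl fun S hS => ?_
    have hSsub : (↑S : Set α) ⊆ M.E \ ↑T := by
      rw [← hcoe, ← Finset.coe_sdiff]
      exact Finset.coe_subset.mpr (Finset.mem_powerset.mp hS)
    have h1 := rk_contract_add hE hTsub hSsub
    have h2 := rk_contract_ground_add hE hTsub
    have h3 : rk M (↑T ∪ ↑S) ≤ r :=
      rk_mono hE (Set.union_subset hTsub (hSsub.trans Set.diff_subset))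
    have h4 : (contract M ↑T).E = M.E \ ↑T := contract_ground M ↑T
    rw [h4]
    have hexp : rk (contract M ↑T) (M.E \ ↑T) - rk (contract M ↑T) ↑S
        = r - rk M (↑T ∪ ↑S) := by omega
    rw [hexp]
  have hkey : ∑ T ∈ 𝒢, charPoly (contract M ↑T) = (X : Polynomial ℤ) ^ (r - 1) := by
    rw [Finset.sum_congr rfl hstep]
    have hre : ∑ T ∈ 𝒢, ∑ S ∈ (E' \ T).powerset,
          (-1 : ℤ) ^ S.card • (X : Polynomial ℤ) ^ (r - rk M (↑T ∪ ↑S))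
        = ∑ U ∈ 𝒢, ∑ S ∈ (U.erase e).powerset,
          (-1 : ℤ) ^ S.card • (X : Polynomial ℤ) ^ (r - rk M ↑U) := by
      rw [Finset.sum_sigma', Finset.sum_sigma']
      refine Finset.sum_bij' (fun p _ => ⟨p.1 ∪ p.2, p.2⟩) (fun p _ => ⟨p.1 \ p.2, p.2⟩)
        ?_ ?_ ?_ ?_ ?_
      · rintro ⟨T, S⟩ hp
        simp only [Finset.mem_sigma, h𝒢, Finset.mem_filter, Finset.mem_powerset] at hp ⊢
        obtain ⟨⟨hTP, heT⟩, hS⟩ := hp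
        have hSE : S ⊆ E' := hS.trans Finset.sdiff_subset
        refine ⟨⟨Finset.union_subset hTP hSE, Finset.mem_union_left _ heT⟩, fun a ha => ?_⟩
        refine Finset.mem_erase.mpr ⟨fun h => ?_, Finset.mem_union_right _ ha⟩
        exact (Finset.mem_sdiff.mp (hS ha)).2 (h ▸ heT)
      · rintro ⟨U, S⟩ hp
        simp only [Finset.mem_sigma, h𝒢, Finset.mem_filter, Finset.mem_powerset] at hp ⊢
        obtain ⟨⟨hUP, heU⟩, hS⟩ := hp
        refine ⟨⟨Finset.sdiff_subset.trans hUP, Finset.mem_sdiff.mpr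
          ⟨heU, fun h => (Finset.mem_erase.mp (hS h)).1 rfl⟩⟩, fun a ha => ?_⟩
        refine Finset.mem_sdiff.mpr ⟨hUP (Finset.mem_of_mem_erase (hS ha)), ?_⟩
        exact fun h => (Finset.mem_sdiff.mp h).2 ha
      · rintro ⟨T, S⟩ hp
        simp only [Finset.mem_sigma, h𝒢, Finset.mem_filter, Finset.mem_powerset] at hp
        obtain ⟨⟨hTP, heT⟩, hS⟩ := hp
        have hd : (T ∪ S) \ S = T := by
          ext a
          simp only [Finset.mem_sdiff, Finset.mem_union]
          constructor
          · rintro ⟨h1 | h1, h2⟩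
            · exact h1
            · exact absurd h1 h2
          · intro ha
            exact ⟨Or.inl ha, fun h => (Finset.mem_sdiff.mp (hS h)).2 ha⟩
        simp only [hd]
      · rintro ⟨U, S⟩ hp
        simp only [Finset.mem_sigma, h𝒢, Finset.mem_filter, Finset.mem_powerset] at hp
        obtain ⟨⟨hUP, heU⟩, hS⟩ := hp
        have hd : U \ S ∪ S = U :=
          Finset.sdiff_union_of_subset (hS.trans (Finset.erase_subset _ _))
        simp only [hd]
      · rintro ⟨T, S⟩ hp
        simp only [Finset.coe_union]
    rw [hre]
    have hcol : ∀ U ∈ 𝒢, ∑ S ∈ (U.erase e).powerset,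
          (-1 : ℤ) ^ S.card • (X : Polynomial ℤ) ^ (r - rk M ↑U)
        = (if U.erase e = ∅ then (1 : ℤ) else 0) • (X : Polynomial ℤ) ^ (r - rk M ↑U) := by
      intro U _
      rw [← Finset.sum_smul, Finset.sum_powerset_neg_one_pow_card]
    rw [Finset.sum_congr rfl hcol]
    have h0 : ∀ U ∈ 𝒢, U ≠ {e} →
        (if U.erase e = ∅ then (1 : ℤ) else 0) • (X : Polynomial ℤ) ^ (r - rk M ↑U) = 0 := by
      intro U hU hne
      have heU : e ∈ U := (Finset.mem_filter.mp hU).2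
      have hner : U.erase e ≠ ∅ := by
        intro h
        refine hne (Finset.eq_singleton_iff_unique_mem.mpr ⟨heU, fun b hb => ?_⟩)
        by_contra hbe
        exact absurd (h ▸ Finset.mem_erase.mpr ⟨hbe, hb⟩) (Finset.notMem_empty b)
      rw [if_neg hner, zero_smul]
    have h1 : ({e} : Finset α) ∉ 𝒢 →
        (if ({e} : Finset α).erase e = ∅ then (1 : ℤ) else 0)
          • (X : Polynomial ℤ) ^ (r - rk M ↑({e} : Finset α)) = 0 := by
      intro h
      exact absurd (Finset.mem_filter.mpr
        ⟨Finset.mem_powerset.mpr (Finset.singleton_subset_iff.mpr heE'),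
          Finset.mem_singleton_self e⟩) h
    rw [Finset.sum_eq_single ({e} : Finset α) h0 h1, Finset.erase_singleton, if_pos rfl,
      one_smul, Finset.coe_singleton, hrk1]
  -- assemble everything
  have hfin : ∑ T ∈ 𝒻, charPoly (contract M ↑T) = (X : Polynomial ℤ) ^ (r - 1) - 1 := by
    rw [htop] at hsplit
    rw [← hvanish, hkey] at hsplit
    exact eq_sub_of_add_eq hsplit
  have hXne : ((X : Polynomial ℤ) - 1) ≠ 0 := by
    intro h
    have h2 := congrArg (Polynomial.eval 0) h
    simp at h2
  have hconv2 : ∑ᶠ F ∈ {F : Set α | M.IsFlat F ∧ e ∈ F ∧ F ⊂ M.E}, redCharPoly (contract M F)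
      = ∑ T ∈ 𝒻, redCharPoly (contract M ↑T) := by
    rw [show {F : Set α | M.IsFlat F ∧ e ∈ F ∧ F ⊂ M.E} = {F | Q F} from rfl, hconv]
    refine Finset.sum_congr ?_ fun _ _ => rfl
    ext T
    rw [h𝒻]
    simp only [Finset.mem_filter]
  apply mul_left_cancel₀ hXne
  rw [hconv2, hmulF, hfin, X_sub_one_mul_qAnalogue]


end MatroidZeta
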